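/- arXiv:2506.15216 — 2 statements merged into one kernel-verified Lean document; each statement's English description precedes it below -/
import Mathlib

section
/- For every fixed predicted class k̂ ∈ {1,…,K}, the Gerrity scoring matrix satisfies ∑_{e=1}^K p_e s_{k̂,e} = 0. Consequently, the Gerrity skill score is equitable: a forecaster that always predicts the same class k̂ against observations distributed according to p has expected score ∑_{e=1}^K p_e s_{k̂,e} = 0, and more generally any forecaster whose joint distribution factorizes as p_{k̂,e} = q_{k̂} p_e (predictions independent of observations, with q a probability vector) has Equitable Skill Score ESS = ∑_{k̂=1}^K ∑_{e=1}^K p_{k̂,e} s_{k̂,e} = 0. -/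
/-- `Pcum K p r` is the cumulative probability `P_r = ∑_{e=1}^r p_e` of the
first `r` classes (classes are `0`-indexed by `Fin K`, so this sums `p e` over
`e` with `(e : ℕ) < r`). -/
noncomputable def Pcum (K : ℕ) (p : Fin K → ℝ) (r : ℕ) : ℝ :=
  ∑ e ∈ Finset.univ.filter (fun e : Fin K => (e : ℕ) < r), p e

/-- `aG K p r = (1 - P_r) / P_r`. -/
noncomputable def aG (K : ℕ) (p : Fin K → ℝ) (r : ℕ) : ℝ :=
  (1 - Pcum K p r) / Pcum K p r

/-- The Gerrity scoring matrix: for `1`-indexed classes `k̂ ≤ e`,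
`s_{k̂,e} = s_{e,k̂} = (1/(K-1)) (∑_{r=1}^{k̂-1} a_r⁻¹ - (e - k̂) + ∑_{r=e}^{K-1} a_r)`.
Here `j k : Fin K` are the `0`-indexed classes (`j = k̂ - 1`, `k = e - 1`), and
the formula is symmetrized via `min`/`max`. -/
noncomputable def gerrity (K : ℕ) (p : Fin K → ℝ) (j k : Fin K) : ℝ :=
  (1 / ((K : ℝ) - 1)) *
    ((∑ r ∈ Finset.Icc 1 (min (j : ℕ) (k : ℕ)), (aG K p r)⁻¹)
      - (((max (j : ℕ) (k : ℕ) : ℕ) : ℝ) - ((min (j : ℕ) (k : ℕ) : ℕ) : ℝ))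
      + ∑ r ∈ Finset.Icc (max (j : ℕ) (k : ℕ) + 1) (K - 1), aG K p r)

noncomputable def Gterm (K : ℕ) (p : Fin K → ℝ) (j e : Fin K) (r : ℕ) : ℝ :=
  if r ≤ min (j : ℕ) (e : ℕ) then (aG K p r)⁻¹
  else if r ≤ max (j : ℕ) (e : ℕ) then -1 else aG K p r

lemma Icc_one_eq_Ioc (n : ℕ) : Finset.Icc 1 n = Finset.Ioc 0 n := by
  ext x; simp; omega

lemma gerrity_eq (K : ℕ) (hK : 2 ≤ K) (p : Fin K → ℝ) (j e : Fin K) :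
    gerrity K p j e =
      (1 / ((K : ℝ) - 1)) * ∑ r ∈ Finset.Icc 1 (K - 1), Gterm K p j e r := by
  set m := min (j : ℕ) (e : ℕ) with hm
  set M := max (j : ℕ) (e : ℕ) with hM
  have hmM : m ≤ M := min_le_max
  have hMK : M ≤ K - 1 := by
    have := j.isLt; have := e.isLt; omega
  have hsplit :
      ∑ r ∈ Finset.Icc 1 (K - 1), Gterm K p j e r =
        (∑ r ∈ Finset.Ioc 0 m, Gterm K p j e r)
        + (∑ r ∈ Finset.Ioc m M, Gterm K p j e r)
        + (∑ r ∈ Finset.Ioc M (K - 1), Gterm K p j e r) := by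
    rw [Icc_one_eq_Ioc, ← Finset.sum_Ioc_consecutive _ (Nat.zero_le M) hMK,
      ← Finset.sum_Ioc_consecutive _ (Nat.zero_le m) hmM]
  have h1 : ∑ r ∈ Finset.Ioc 0 m, Gterm K p j e r
      = ∑ r ∈ Finset.Icc 1 m, (aG K p r)⁻¹ := by
    rw [Icc_one_eq_Ioc]
    refine Finset.sum_congr rfl fun r hr => ?_
    simp only [Finset.mem_Ioc] at hr
    simp only [Gterm]; rw [if_pos (show r ≤ min (j : ℕ) (e : ℕ) from hr.2)]
  have h2 : ∑ r ∈ Finset.Ioc m M, Gterm K p j e r = -(((M : ℝ)) - (m : ℝ)) := by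
    have : ∀ r ∈ Finset.Ioc m M, Gterm K p j e r = -1 := by
      intro r hr
      simp only [Finset.mem_Ioc] at hr
      simp only [Gterm]; rw [if_neg (show ¬ r ≤ min (j : ℕ) (e : ℕ) by omega), if_pos (show r ≤ max (j : ℕ) (e : ℕ) by omega)]
    rw [Finset.sum_congr rfl this, Finset.sum_const, Nat.card_Ioc,
      nsmul_eq_mul, Nat.cast_sub hmM]
    ring
  have h3 : ∑ r ∈ Finset.Ioc M (K - 1), Gterm K p j e r
      = ∑ r ∈ Finset.Icc (M + 1) (K - 1), aG K p r := by
    rw [← Finset.Icc_add_one_left_eq_Ioc]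
    refine Finset.sum_congr rfl fun r hr => ?_
    simp only [Finset.mem_Icc] at hr
    have h1 : ¬ r ≤ m := by omega
    have h2 : ¬ r ≤ M := by omega
    simp only [Gterm]; rw [if_neg (show ¬ r ≤ min (j : ℕ) (e : ℕ) by omega), if_neg (show ¬ r ≤ max (j : ℕ) (e : ℕ) by omega)]
  rw [gerrity, hsplit, h1, h2, h3]; ring

lemma Pcum_pos (K : ℕ) (hK : 2 ≤ K) (p : Fin K → ℝ) (hp : ∀ e, 0 < p e)
    {r : ℕ} (hr : 1 ≤ r) : 0 < Pcum K p r := by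
  have h0 : (⟨0, by omega⟩ : Fin K) ∈
      Finset.univ.filter (fun e : Fin K => (e : ℕ) < r) := by
    simp; omega
  exact Finset.sum_pos' (fun e _ => (hp e).le) ⟨_, h0, hp _⟩

lemma Pcum_lt_one (K : ℕ) (hK : 2 ≤ K) (p : Fin K → ℝ) (hp : ∀ e, 0 < p e)
    (hpsum : ∑ e, p e = 1) {r : ℕ} (hr : r ≤ K - 1) : Pcum K p r < 1 := by
  rw [← hpsum]
  refine Finset.sum_lt_sum_of_subset (Finset.filter_subset _ _)
    (i := ⟨K - 1, by omega⟩) (Finset.mem_univ _) (by simp; omega) (hp _)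
    (fun j _ _ => (hp j).le)

lemma inner_sum_zero (K : ℕ) (hK : 2 ≤ K) (p : Fin K → ℝ) (hp : ∀ e, 0 < p e)
    (hpsum : ∑ e, p e = 1) (j : Fin K) {r : ℕ} (hr1 : 1 ≤ r) (hr2 : r ≤ K - 1) :
    ∑ e, p e * Gterm K p j e r = 0 := by
  have hP0 : 0 < Pcum K p r := Pcum_pos K hK p hp hr1
  have hP1 : Pcum K p r < 1 := Pcum_lt_one K hK p hp hpsum hr2
  have hsum : ∑ e ∈ Finset.univ.filter (fun e : Fin K => ¬ (r ≤ (e : ℕ))), p e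
      = Pcum K p r := by
    rw [Pcum]
    refine Finset.sum_congr ?_ (fun _ _ => rfl)
    ext x; simp only [Finset.mem_filter, Finset.mem_univ, true_and]; omega
  have hsum2 : ∑ e ∈ Finset.univ.filter (fun e : Fin K => r ≤ (e : ℕ)), p e
      = 1 - Pcum K p r := by
    have := Finset.sum_filter_add_sum_filter_not Finset.univ
      (fun e : Fin K => r ≤ (e : ℕ)) p
    rw [hpsum] at this
    rw [← hsum]; linarith [hsum, this]
  have key : ∀ x y : ℝ, ∑ e, p e * (if r ≤ (e : ℕ) then x else y)
      = x * (1 - Pcum K p r) + y * Pcum K p r := by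
    intro x y
    simp only [mul_ite]
    rw [Finset.sum_ite]
    rw [← Finset.sum_mul, ← Finset.sum_mul, hsum, hsum2]; ring
  by_cases hj : r ≤ (j : ℕ)
  · have heq : ∀ e : Fin K, Gterm K p j e r
        = if r ≤ (e : ℕ) then (aG K p r)⁻¹ else -1 := by
      intro e
      by_cases he : r ≤ (e : ℕ)
      · simp [Gterm, le_min hj he, he]
      · have h1 : ¬ r ≤ min (j : ℕ) (e : ℕ) := by omega
        have h2 : r ≤ max (j : ℕ) (e : ℕ) := le_max_of_le_left hj
        simp [Gterm, h1, h2, he]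
    rw [Finset.sum_congr rfl (fun e _ => by rw [heq e]), key]
    have : (aG K p r)⁻¹ = Pcum K p r / (1 - Pcum K p r) := by
      rw [aG, inv_div]
    rw [this]
    have hne : (1:ℝ) - Pcum K p r ≠ 0 := by linarith
    field_simp; ring
  · have heq : ∀ e : Fin K, Gterm K p j e r
        = if r ≤ (e : ℕ) then -1 else aG K p r := by
      intro e
      by_cases he : r ≤ (e : ℕ)
      · have h1 : ¬ r ≤ min (j : ℕ) (e : ℕ) := by omega
        have h2 : r ≤ max (j : ℕ) (e : ℕ) := le_max_of_le_right he
        simp [Gterm, h1, h2, he]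
      · have h1 : ¬ r ≤ min (j : ℕ) (e : ℕ) := by omega
        have h2 : ¬ r ≤ max (j : ℕ) (e : ℕ) := by omega
        simp [Gterm, h1, h2, he]
    rw [Finset.sum_congr rfl (fun e _ => by rw [heq e]), key, aG]
    have hne : Pcum K p r ≠ 0 := ne_of_gt hP0
    field_simp; ring

/-- Equitability of the Gerrity skill score: for every fixed predicted class
`k̂`, `∑_e p_e s_{k̂,e} = 0`; consequently any forecaster whose predictions are
independent of the observations (joint distribution `p_{k̂,e} = q_{k̂} p_e`)
has Equitable Skill Score `0`. -/
theorem gerrity_equitable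
    (K : ℕ) (hK : 2 ≤ K) (p : Fin K → ℝ)
    (hp : ∀ e, 0 < p e) (hpsum : ∑ e, p e = 1) :
    (∀ khat : Fin K, ∑ e, p e * gerrity K p khat e = 0) ∧
    (∀ q : Fin K → ℝ, (∀ khat, 0 ≤ q khat) → ∑ khat, q khat = 1 →
      ∑ khat : Fin K, ∑ e : Fin K, (q khat * p e) * gerrity K p khat e = 0) := by
  have main : ∀ khat : Fin K, ∑ e, p e * gerrity K p khat e = 0 := by
    intro khat
    have step1 : ∀ e : Fin K, p e * gerrity K p khat e
        = ∑ r ∈ Finset.Icc 1 (K - 1),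
            (1 / ((K : ℝ) - 1)) * (p e * Gterm K p khat e r) := by
      intro e
      rw [gerrity_eq K hK p khat e, Finset.mul_sum, Finset.mul_sum]
      exact Finset.sum_congr rfl fun r _ => by ring
    rw [Finset.sum_congr rfl fun e _ => step1 e, Finset.sum_comm]
    refine Finset.sum_eq_zero fun r hr => ?_
    simp only [Finset.mem_Icc] at hr
    rw [← Finset.mul_sum, inner_sum_zero K hK p hp hpsum khat hr.1 hr.2, mul_zero]
  refine ⟨main, fun q hq hqsum => ?_⟩
  have : ∀ khat : Fin K, ∑ e : Fin K, (q khat * p e) * gerrity K p khat e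
      = q khat * ∑ e, p e * gerrity K p khat e := by
    intro khat; rw [Finset.mul_sum]; exact Finset.sum_congr rfl fun e _ => by ring
  calc ∑ khat : Fin K, ∑ e : Fin K, (q khat * p e) * gerrity K p khat e
      = ∑ khat : Fin K, q khat * ∑ e, p e * gerrity K p khat e :=
        Finset.sum_congr rfl fun khat _ => this khat
    _ = 0 := by simp [main]
end

section
/- The diagonal of the Gerrity scoring matrix satisfies ∑_{e=1}^K p_e s_{e,e} = 1. In other words, a perfect forecaster, whose joint distribution of prediction and observation is concentrated on the diagonal with p_{e,e} = p_e and p_{k̂,e} = 0 for k̂ ≠ e, has Equitable Skill Score ESS = ∑_{k̂,e} p_{k̂,e} s_{k̂,e} = 1. -/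
/-- The diagonal of the Gerrity scoring matrix satisfies `∑_e p_e s_{e,e} = 1`:
a perfect forecaster, whose joint distribution is concentrated on the diagonal
with `p_{e,e} = p_e`, has Equitable Skill Score `1`. -/
theorem gerrity_perfect_forecaster
    (K : ℕ) (hK : 2 ≤ K) (p : Fin K → ℝ)
    (hp : ∀ e, 0 < p e) (hpsum : ∑ e, p e = 1) :
    ∑ e, p e * gerrity K p e e = 1 := by
  have hKpos : 0 < K := by omega
  set T := Finset.Icc 1 (K-1) with hT
  set Q : ℕ → ℝ := fun r => ∑ j ∈ Finset.univ.filter (fun j : Fin K => r ≤ (j:ℕ)), p j with hQ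
  have hPQ : ∀ r : ℕ, Pcum K p r + Q r = 1 := by
    intro r
    rw [Pcum, hQ, ← hpsum,
      ← Finset.sum_filter_add_sum_filter_not (Finset.univ : Finset (Fin K))
        (fun j : Fin K => (j:ℕ) < r) p]
    congr 1
    apply Finset.sum_congr _ (fun _ _ => rfl)
    ext j; simp
  have hPpos : ∀ r ∈ T, 0 < Pcum K p r := by
    intro r hr
    simp only [hT, Finset.mem_Icc] at hr
    apply Finset.sum_pos (fun j _ => hp j)
    exact ⟨⟨0, hKpos⟩, by simp; omega⟩
  have hQpos : ∀ r ∈ T, 0 < Q r := by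
    intro r hr
    simp only [hT, Finset.mem_Icc] at hr
    apply Finset.sum_pos (fun j _ => hp j)
    exact ⟨⟨r, by omega⟩, by simp⟩
  have hkey : ∀ r ∈ T, (aG K p r)⁻¹ * Q r + aG K p r * Pcum K p r = 1 := by
    intro r hr
    have hP0 : Pcum K p r ≠ 0 := ne_of_gt (hPpos r hr)
    have hQ0 : Q r ≠ 0 := ne_of_gt (hQpos r hr)
    have h1 : 1 - Pcum K p r = Q r := by linarith [hPQ r]
    rw [aG, h1, inv_div, div_mul_cancel₀ _ hQ0, div_mul_cancel₀ _ hP0]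
    exact hPQ r
  have step1 : ∑ e, p e * gerrity K p e e
      = ∑ j : Fin K, (1/((K:ℝ)-1)) *
          ∑ r ∈ T, ((if r ≤ (j:ℕ) then (aG K p r)⁻¹ else aG K p r) * p j) := by
    apply Finset.sum_congr rfl
    intro j _
    have hj := j.isLt
    have e1 : T.filter (fun r => r ≤ (j:ℕ)) = Finset.Icc 1 (j:ℕ) := by
      ext r; simp only [hT, Finset.mem_filter, Finset.mem_Icc]; omega
    have e2 : T.filter (fun r => ¬ r ≤ (j:ℕ)) = Finset.Icc ((j:ℕ)+1) (K-1) := by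
      ext r; simp only [hT, Finset.mem_filter, Finset.mem_Icc]; omega
    rw [gerrity]
    simp only [min_self, max_self, sub_self, sub_zero]
    rw [← Finset.sum_mul, Finset.sum_ite, e1, e2]
    ring
  rw [step1, ← Finset.mul_sum, Finset.sum_comm]
  have step2 : ∀ r ∈ T, ∑ j : Fin K,
      ((if r ≤ (j:ℕ) then (aG K p r)⁻¹ else aG K p r) * p j) = 1 := by
    intro r hr
    rw [← Finset.sum_filter_add_sum_filter_not (Finset.univ : Finset (Fin K))
      (fun j : Fin K => r ≤ (j:ℕ))]
    have h1 : ∑ j ∈ Finset.univ.filter (fun j : Fin K => r ≤ (j:ℕ)),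
        ((if r ≤ (j:ℕ) then (aG K p r)⁻¹ else aG K p r) * p j) = (aG K p r)⁻¹ * Q r := by
      rw [hQ, Finset.mul_sum]
      apply Finset.sum_congr rfl
      intro j hj
      simp only [Finset.mem_filter] at hj
      rw [if_pos hj.2]
    have h2 : ∑ j ∈ Finset.univ.filter (fun j : Fin K => ¬ r ≤ (j:ℕ)),
        ((if r ≤ (j:ℕ) then (aG K p r)⁻¹ else aG K p r) * p j) = aG K p r * Pcum K p r := by
      rw [Pcum, Finset.mul_sum]
      have hset : Finset.univ.filter (fun j : Fin K => ¬ r ≤ (j:ℕ))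
          = Finset.univ.filter (fun j : Fin K => (j:ℕ) < r) := by
        ext j; simp
      rw [hset]
      apply Finset.sum_congr rfl
      intro j hj
      simp only [Finset.mem_filter] at hj
      rw [if_neg (by omega)]
    rw [h1, h2]
    exact hkey r hr
  rw [Finset.sum_congr rfl step2, Finset.sum_const, Nat.card_Icc]
  have : ((K - 1 + 1 - 1 : ℕ) : ℝ) = (K:ℝ) - 1 := by
    rw [Nat.sub_add_cancel (by omega), Nat.cast_sub (by omega)]; simp
  rw [nsmul_eq_mul, this, mul_one]
  have hK1 : (K:ℝ) - 1 ≠ 0 := by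
    have : (2:ℝ) ≤ (K:ℝ) := by exact_mod_cast hK
    linarith
  field_simp
end
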